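/- Let Δt > 0 and ξ, Π, A, B, Π′ ∈ ℝ³ satisfy one step of the rigid-body midpoint integrator: d⁺(Δt,ξ,A) = Π, d⁺(Δt,ξ,B) = d⁻(Δt,ξ,A), and Π′ = d⁻(Δt,ξ,B). Then ‖Π′‖ = ‖Π‖; that is, each step of the scheme preserves the coadjoint orbit (the sphere of radius ‖Π‖) in 𝔰𝔬(3)* ≅ ℝ³, and hence preserves the Casimir ‖Π‖². -/

import Mathlib

open Matrix

noncomputable section

/-- The Euclidean norm on `ℝ³ = Fin 3 → ℝ`. -/
def e3norm (v : Fin 3 → ℝ) : ℝ := Real.sqrt (v ⬝ᵥ v)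

/-- `d⁺(h,ξ,Π) = Π + (h/2) ξ×Π − (h²/4)(ξ·Π)ξ`. -/
def dplus (h : ℝ) (ξ Pv : Fin 3 → ℝ) : Fin 3 → ℝ :=
  Pv + (h / 2) • (ξ ⨯₃ Pv) - (h ^ 2 / 4 * (ξ ⬝ᵥ Pv)) • ξ

/-- `d⁻(h,ξ,Π) = Π − (h/2) ξ×Π − (h²/4)(ξ·Π)ξ`. -/
def dminus (h : ℝ) (ξ Pv : Fin 3 → ℝ) : Fin 3 → ℝ :=
  Pv - (h / 2) • (ξ ⨯₃ Pv) - (h ^ 2 / 4 * (ξ ⬝ᵥ Pv)) • ξ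

lemma key (h : ℝ) (ξ v : Fin 3 → ℝ) :
    e3norm (dplus h ξ v) = e3norm (dminus h ξ v) := by
  unfold e3norm dplus dminus
  congr 1
  simp [dotProduct, crossProduct, Fin.sum_univ_three, Matrix.vecHead, Matrix.vecTail]
  ring

/-- One step of the rigid-body stochastic variational midpoint integrator preserves the
coadjoint orbit (the sphere of radius `‖Π‖`) in `𝔰𝔬(3)* ≅ ℝ³`, hence the Casimir `‖Π‖²`. -/
theorem midpoint_step_preserves_coadjoint_orbit
    (Δt : ℝ) (hΔt : 0 < Δt) (ξ Pv A B Pv' : Fin 3 → ℝ)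
    (h1 : dplus Δt ξ A = Pv)
    (h2 : dplus Δt ξ B = dminus Δt ξ A)
    (h3 : Pv' = dminus Δt ξ B) :
    e3norm Pv' = e3norm Pv := by
  calc e3norm Pv' = e3norm (dminus Δt ξ B) := by rw [h3]
    _ = e3norm (dplus Δt ξ B) := (key Δt ξ B).symm
    _ = e3norm (dminus Δt ξ A) := by rw [h2]
    _ = e3norm (dplus Δt ξ A) := (key Δt ξ A).symm
    _ = e3norm Pv := by rw [h1]
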